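/- The potential V(s) = −c(s)c''(s)·p(φ(s))/φ'(s) − c(s)c'(s)·(d/ds)[p(φ(s))/φ'(s)] satisfies V(s) ∼ (3/4) s^{-2} as s → 0+ and V(s) ∼ (1/ε² − 1/4)(β−s)^{-2} as s → β−. -/

import Mathlib

open MeasureTheory Set Filter

noncomputable def pp (ε x : ℝ) : ℝ := (1 - x) ^ ((1:ℝ) + 1/ε) * (1 + x) ^ ((1:ℝ) - 1/ε)

noncomputable def ww (ε x : ℝ) : ℝ := x⁻¹ * (1 - x) ^ ((1:ℝ)/ε) * (1 + x) ^ (-(1:ℝ)/ε)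

noncomputable def betaIntegrand (y : ℝ) : ℝ :=
  y ^ (-(1:ℝ)/2) * (1 - y) ^ (-(1:ℝ)/2) * (1 + y) ^ (-(1:ℝ)/2)

noncomputable def psi (t : ℝ) : ℝ := ∫ y in Ioo (0:ℝ) t, betaIntegrand y

noncomputable def cfun (ε : ℝ) (φ : ℝ → ℝ) (s : ℝ) : ℝ :=
  (ww ε (φ s) * pp ε (φ s)) ^ (-(1:ℝ)/4)

/-- The potential V(s) = −c c'' · p(φ)/φ' − c c' · (d/ds)[p(φ)/φ']. -/
noncomputable def Vpot (ε : ℝ) (φ : ℝ → ℝ) (s : ℝ) : ℝ :=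
  -cfun ε φ s * deriv (deriv (cfun ε φ)) s * (pp ε (φ s) / deriv φ s)
    - cfun ε φ s * deriv (cfun ε φ) s * deriv (fun u => pp ε (φ u) / deriv φ u) s



lemma beta_nonneg {y : ℝ} (hy : 0 ≤ y) (hy1 : y ≤ 1) : 0 ≤ betaIntegrand y := by
  have h2 : (0:ℝ) ≤ 1 - y := by linarith
  have h3 : (0:ℝ) ≤ 1 + y := by linarith
  unfold betaIntegrand; positivity

lemma beta_pos {y : ℝ} (hy : y ∈ Ioo (0:ℝ) 1) : 0 < betaIntegrand y := by
  have h1 : (0:ℝ) < y := hy.1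
  have h2 : (0:ℝ) < 1 - y := by linarith [hy.2]
  have h3 : (0:ℝ) < 1 + y := by linarith
  unfold betaIntegrand; positivity

lemma beta_measurable : Measurable betaIntegrand := by
  unfold betaIntegrand; fun_prop

lemma beta_intable {a b : ℝ} (ha : a ∈ Icc (0:ℝ) 1) (hb : b ∈ Icc (0:ℝ) 1) :
    IntervalIntegrable betaIntegrand volume a b := by
  have key : IntervalIntegrable betaIntegrand volume 0 1 := by
    have h1 : IntervalIntegrable betaIntegrand volume 0 (1/2) := by
      have hg : IntervalIntegrable (fun y : ℝ => 2 * y ^ (-(1:ℝ)/2)) volume 0 (1/2) :=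
        (intervalIntegral.intervalIntegrable_rpow' (by norm_num)).const_mul _
      refine hg.mono_fun beta_measurable.aestronglyMeasurable ?_
      rw [Filter.EventuallyLE, ae_restrict_iff' measurableSet_uIoc]
      filter_upwards with y hy
      rw [Set.uIoc_of_le (by norm_num : (0:ℝ) ≤ 1/2)] at hy
      obtain ⟨hy0, hy2⟩ := hy
      have h2 : (0:ℝ) < 1 - y := by linarith
      have h3 : (0:ℝ) < 1 + y := by linarith
      rw [Real.norm_eq_abs, Real.norm_eq_abs, abs_of_nonneg (beta_nonneg hy0.le (by linarith)),
        abs_of_nonneg (by positivity)]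
      have b1 : (1 - y) ^ (-(1:ℝ)/2) ≤ 2 := by
        calc (1 - y) ^ (-(1:ℝ)/2) ≤ (1 - y) ^ (-1:ℝ) :=
              Real.rpow_le_rpow_of_exponent_ge h2 (by linarith) (by norm_num)
          _ = (1 - y)⁻¹ := Real.rpow_neg_one _
          _ ≤ 2 := by rw [inv_le_comm₀ h2 (by norm_num)]; linarith
      have b2 : (1 + y) ^ (-(1:ℝ)/2) ≤ 1 :=
        Real.rpow_le_one_of_one_le_of_nonpos (by linarith) (by norm_num)
      unfold betaIntegrand
      calc y ^ (-(1:ℝ)/2) * (1 - y) ^ (-(1:ℝ)/2) * (1 + y) ^ (-(1:ℝ)/2)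
          ≤ y ^ (-(1:ℝ)/2) * 2 * 1 :=
            mul_le_mul (mul_le_mul le_rfl b1 (by positivity) (by positivity)) b2
              (by positivity) (by positivity)
        _ = 2 * y ^ (-(1:ℝ)/2) := by ring
    have h2' : IntervalIntegrable betaIntegrand volume (1/2) 1 := by
      have hg0 : IntervalIntegrable (fun y : ℝ => y ^ (-(1:ℝ)/2)) volume 0 (1/2) :=
        intervalIntegral.intervalIntegrable_rpow' (by norm_num)
      have hg1 := ((hg0.comp_sub_left 1).symm).const_mul 2
      norm_num at hg1
      refine hg1.mono_fun beta_measurable.aestronglyMeasurable ?_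
      rw [Filter.EventuallyLE, ae_restrict_iff' measurableSet_uIoc]
      filter_upwards with y hy
      rw [Set.uIoc_of_le (by norm_num : (1:ℝ)/2 ≤ 1)] at hy
      obtain ⟨hy0, hy2⟩ := hy
      have h0 : (0:ℝ) < y := by linarith
      have h2 : (0:ℝ) ≤ 1 - y := by linarith
      have h3 : (0:ℝ) < 1 + y := by linarith
      rw [Real.norm_eq_abs, Real.norm_eq_abs, abs_of_nonneg (beta_nonneg h0.le (by linarith)),
        abs_of_nonneg (by positivity)]
      have b1 : y ^ (-(1:ℝ)/2) ≤ 2 := by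
        calc y ^ (-(1:ℝ)/2) ≤ y ^ (-1:ℝ) :=
              Real.rpow_le_rpow_of_exponent_ge h0 (by linarith) (by norm_num)
          _ = y⁻¹ := Real.rpow_neg_one _
          _ ≤ 2 := by rw [inv_le_comm₀ h0 (by norm_num)]; linarith
      have b2 : (1 + y) ^ (-(1:ℝ)/2) ≤ 1 :=
        Real.rpow_le_one_of_one_le_of_nonpos (by linarith) (by norm_num)
      unfold betaIntegrand
      calc y ^ (-(1:ℝ)/2) * (1 - y) ^ (-(1:ℝ)/2) * (1 + y) ^ (-(1:ℝ)/2)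
          ≤ 2 * (1 - y) ^ (-(1:ℝ)/2) * 1 :=
            mul_le_mul (mul_le_mul b1 le_rfl (by positivity) (by norm_num)) b2
              (by positivity) (by positivity)
        _ = 2 * (1 - y) ^ (-(1:ℝ)/2) := by ring
        _ = 2 * (1 - y) ^ (-((1:ℝ)/2)) := by norm_num
    exact h1.trans h2'
  exact key.mono_set (Set.uIcc_subset_uIcc (by simpa using ha) (by simpa using hb))

lemma psi_eq_intervalIntegral {t : ℝ} (ht : 0 ≤ t) :
    psi t = ∫ y in (0:ℝ)..t, betaIntegrand y := by
  rw [intervalIntegral.integral_of_le ht, MeasureTheory.integral_Ioc_eq_integral_Ioo, psi]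

lemma psi_zero : psi 0 = 0 := by simp [psi]

lemma psi_strictMonoOn : StrictMonoOn psi (Icc (0:ℝ) 1) := by
  intro t₁ h₁ t₂ h₂ hlt
  rw [psi_eq_intervalIntegral h₁.1, psi_eq_intervalIntegral h₂.1]
  have hsplit := intervalIntegral.integral_add_adjacent_intervals
    (beta_intable (left_mem_Icc.2 zero_le_one) h₁) (beta_intable h₁ h₂)
  rw [← hsplit]
  have hpos : 0 < ∫ y in t₁..t₂, betaIntegrand y :=
    intervalIntegral.intervalIntegral_pos_of_pos_on (beta_intable h₁ h₂)
      (fun x hx => beta_pos ⟨lt_of_le_of_lt h₁.1 hx.1, lt_of_lt_of_le hx.2 h₂.2⟩) hlt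
  linarith

lemma psi_one_pos : 0 < psi 1 := by
  have := psi_strictMonoOn (left_mem_Icc.2 zero_le_one) (right_mem_Icc.2 zero_le_one) zero_lt_one
  rwa [psi_zero] at this

lemma beta_continuousAt {t : ℝ} (ht : t ∈ Ioo (0:ℝ) 1) : ContinuousAt betaIntegrand t := by
  have h1 : t ≠ 0 := ne_of_gt ht.1
  have h2 : (1 - t) ≠ 0 := by have := ht.2; intro h; linarith [(by linarith : (1:ℝ) - t > 0)]
  have h3 : (1 + t) ≠ 0 := by have := ht.1; intro h; linarith
  unfold betaIntegrand
  apply ContinuousAt.mul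
  apply ContinuousAt.mul
  · exact Real.continuousAt_rpow_const _ _ (Or.inl h1)
  · exact (Real.continuousAt_rpow_const _ _ (Or.inl h2)).comp (by fun_prop)
  · exact (Real.continuousAt_rpow_const _ _ (Or.inl h3)).comp (by fun_prop)

lemma psi_hasDerivAt {t : ℝ} (ht : t ∈ Ioo (0:ℝ) 1) : HasDerivAt psi (betaIntegrand t) t := by
  have hF : HasDerivAt (fun u => ∫ y in (0:ℝ)..u, betaIntegrand y) (betaIntegrand t) t := by
    apply intervalIntegral.integral_hasDerivAt_right
      (beta_intable (left_mem_Icc.2 zero_le_one) ⟨ht.1.le, ht.2.le⟩)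
      (beta_measurable.stronglyMeasurable.stronglyMeasurableAtFilter)
      (beta_continuousAt ht)
  apply hF.congr_of_eventuallyEq
  filter_upwards [eventually_gt_nhds ht.1] with u hu
  exact psi_eq_intervalIntegral (by linarith)

noncomputable def mfun (t : ℝ) : ℝ := t ^ ((1:ℝ)/2) * (1 - t) ^ ((1:ℝ)/2) * (1 + t) ^ ((1:ℝ)/2)

lemma beta_inv {t : ℝ} (ht : t ∈ Ioo (0:ℝ) 1) : (betaIntegrand t)⁻¹ = mfun t := by
  have h1 : (0:ℝ) < t := ht.1
  have h2 : (0:ℝ) < 1 - t := by linarith [ht.2]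
  have h3 : (0:ℝ) < 1 + t := by linarith
  have e1 : t ^ ((1:ℝ)/2) * t ^ (-(1:ℝ)/2) = 1 := by
    rw [← Real.rpow_add h1]; norm_num
  have e2 : (1 - t) ^ ((1:ℝ)/2) * (1 - t) ^ (-(1:ℝ)/2) = 1 := by
    rw [← Real.rpow_add h2]; norm_num
  have e3 : (1 + t) ^ ((1:ℝ)/2) * (1 + t) ^ (-(1:ℝ)/2) = 1 := by
    rw [← Real.rpow_add h3]; norm_num
  have key : mfun t * betaIntegrand t = 1 := by
    unfold mfun betaIntegrand
    calc t ^ ((1:ℝ)/2) * (1 - t) ^ ((1:ℝ)/2) * (1 + t) ^ ((1:ℝ)/2) *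
        (t ^ (-(1:ℝ)/2) * (1 - t) ^ (-(1:ℝ)/2) * (1 + t) ^ (-(1:ℝ)/2))
        = (t ^ ((1:ℝ)/2) * t ^ (-(1:ℝ)/2)) * ((1 - t) ^ ((1:ℝ)/2) * (1 - t) ^ (-(1:ℝ)/2)) *
          ((1 + t) ^ ((1:ℝ)/2) * (1 + t) ^ (-(1:ℝ)/2)) := by ring
      _ = 1 := by rw [e1, e2, e3]; norm_num
  exact (eq_inv_of_mul_eq_one_left key).symm

section Phi
variable {φ : ℝ → ℝ}
  (hmaps : MapsTo φ (Icc 0 (psi 1)) (Icc (0:ℝ) 1))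
  (hleft : ∀ t ∈ Icc (0:ℝ) 1, φ (psi t) = t)
  (hright : ∀ s ∈ Icc 0 (psi 1), psi (φ s) = s)
include hmaps hleft hright
set_option linter.unusedSectionVars false

lemma phi_mem {s : ℝ} (hs : s ∈ Ioo 0 (psi 1)) : φ s ∈ Ioo (0:ℝ) 1 := by
  have hsc : s ∈ Icc 0 (psi 1) := ⟨hs.1.le, hs.2.le⟩
  have hm := hmaps hsc
  have he := hright s hsc
  constructor
  · rcases lt_or_eq_of_le hm.1 with h | h
    · exact h
    · exfalso; rw [← h] at he; rw [psi_zero] at he; exact absurd he.symm (ne_of_gt hs.1)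
  · rcases lt_or_eq_of_le hm.2 with h | h
    · exact h
    · exfalso; rw [h] at he; exact absurd he (ne_of_gt hs.2)

lemma phi_monotoneOn : MonotoneOn φ (Icc 0 (psi 1)) := by
  intro s₁ h₁ s₂ h₂ hle
  by_contra hlt
  push_neg at hlt
  have := psi_strictMonoOn (hmaps h₂) (hmaps h₁) hlt
  rw [hright s₁ h₁, hright s₂ h₂] at this
  linarith

lemma phi_surj : Ioo (0:ℝ) 1 ⊆ φ '' (Ioo 0 (psi 1)) := by
  intro t ht
  have h1 : psi t ∈ Ioo 0 (psi 1) := by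
    constructor
    · have := psi_strictMonoOn (left_mem_Icc.2 zero_le_one) ⟨ht.1.le, ht.2.le⟩ ht.1
      rwa [psi_zero] at this
    · exact psi_strictMonoOn ⟨ht.1.le, ht.2.le⟩ (right_mem_Icc.2 zero_le_one) ht.2
  exact ⟨psi t, h1, hleft t ⟨ht.1.le, ht.2.le⟩⟩

lemma phi_continuousAt {s : ℝ} (hs : s ∈ Ioo 0 (psi 1)) : ContinuousAt φ s := by
  apply continuousAt_of_monotoneOn_of_image_mem_nhds
    ((phi_monotoneOn hmaps hleft hright).mono Ioo_subset_Icc_self)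
    (isOpen_Ioo.mem_nhds hs)
  apply Filter.mem_of_superset (isOpen_Ioo.mem_nhds (phi_mem hmaps hleft hright hs))
  exact phi_surj hmaps hleft hright

lemma phi_hasDerivAt {s : ℝ} (hs : s ∈ Ioo 0 (psi 1)) :
    HasDerivAt φ (mfun (φ s)) s := by
  have h := HasDerivAt.of_local_left_inverse (phi_continuousAt hmaps hleft hright hs)
    (psi_hasDerivAt (phi_mem hmaps hleft hright hs))
    (ne_of_gt (beta_pos (phi_mem hmaps hleft hright hs)))
    (by filter_upwards [isOpen_Ioo.mem_nhds hs] with y hy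
        exact hright y ⟨hy.1.le, hy.2.le⟩)
  rwa [beta_inv (phi_mem hmaps hleft hright hs)] at h

end Phi

noncomputable def Pfun (α β γ t : ℝ) : ℝ := t ^ α * (1 - t) ^ β * (1 + t) ^ γ

noncomputable def Lfun (α β γ t : ℝ) : ℝ := α / t - β / (1 - t) + γ / (1 + t)

noncomputable def Lfun' (α β γ t : ℝ) : ℝ := -α / t^2 - β / (1 - t)^2 - γ / (1 + t)^2

noncomputable def ca (ε : ℝ) : ℝ := -(1 + 2/ε)/4
noncomputable def cb (ε : ℝ) : ℝ := -(1 - 2/ε)/4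

lemma mfun_eq_Pfun : mfun = Pfun ((1:ℝ)/2) ((1:ℝ)/2) ((1:ℝ)/2) := rfl

lemma Pfun_pos {t : ℝ} (ht : t ∈ Ioo (0:ℝ) 1) (α β γ : ℝ) : 0 < Pfun α β γ t := by
  have h1 : (0:ℝ) < t := ht.1
  have h2 : (0:ℝ) < 1 - t := by linarith [ht.2]
  have h3 : (0:ℝ) < 1 + t := by linarith
  unfold Pfun; positivity

lemma Pfun_mul {t : ℝ} (ht : t ∈ Ioo (0:ℝ) 1) (α₁ β₁ γ₁ α₂ β₂ γ₂ : ℝ) :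
    Pfun α₁ β₁ γ₁ t * Pfun α₂ β₂ γ₂ t = Pfun (α₁+α₂) (β₁+β₂) (γ₁+γ₂) t := by
  have h1 : (0:ℝ) < t := ht.1
  have h2 : (0:ℝ) < 1 - t := by linarith [ht.2]
  have h3 : (0:ℝ) < 1 + t := by linarith
  unfold Pfun
  rw [Real.rpow_add h1, Real.rpow_add h2, Real.rpow_add h3]; ring

lemma hasDerivAt_Pfun {t : ℝ} (ht : t ∈ Ioo (0:ℝ) 1) (α β γ : ℝ) :
    HasDerivAt (Pfun α β γ) (Pfun α β γ t * Lfun α β γ t) t := by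
  have h1 : (0:ℝ) < t := ht.1
  have h2 : (0:ℝ) < 1 - t := by linarith [ht.2]
  have h3 : (0:ℝ) < 1 + t := by linarith
  have d1 : HasDerivAt (fun u : ℝ => u ^ α) (α * t ^ (α - 1)) t :=
    Real.hasDerivAt_rpow_const (Or.inl h1.ne')
  have i2 : HasDerivAt (fun u : ℝ => 1 - u) (-1 : ℝ) t := by
    simpa using (hasDerivAt_id t).const_sub 1
  have d2 : HasDerivAt (fun u : ℝ => (1 - u) ^ β) (β * (1 - t) ^ (β - 1) * (-1)) t :=
    (Real.hasDerivAt_rpow_const (p := β) (Or.inl h2.ne')).comp t i2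
  have i3 : HasDerivAt (fun u : ℝ => 1 + u) (1 : ℝ) t := by
    simpa using (hasDerivAt_id t).const_add 1
  have d3 : HasDerivAt (fun u : ℝ => (1 + u) ^ γ) (γ * (1 + t) ^ (γ - 1) * 1) t :=
    (Real.hasDerivAt_rpow_const (p := γ) (Or.inl h3.ne')).comp t i3
  have := (d1.mul d2).mul d3
  refine this.congr_deriv ?_
  symm
  rw [Real.rpow_sub_one h1.ne', Real.rpow_sub_one h2.ne', Real.rpow_sub_one h3.ne']
  unfold Pfun Lfun
  simp only [Pi.mul_apply]
  field_simp
  ring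

lemma hasDerivAt_Lfun {t : ℝ} (ht : t ∈ Ioo (0:ℝ) 1) (α β γ : ℝ) :
    HasDerivAt (Lfun α β γ) (Lfun' α β γ t) t := by
  have h1 : (0:ℝ) < t := ht.1
  have h2 : (0:ℝ) < 1 - t := by linarith [ht.2]
  have h3 : (0:ℝ) < 1 + t := by linarith
  have d1 : HasDerivAt (fun u : ℝ => α / u) (-(α / t ^ 2)) t := by
    simpa [div_eq_mul_inv] using (hasDerivAt_inv h1.ne').const_mul α
  have i2 : HasDerivAt (fun u : ℝ => 1 - u) (-1 : ℝ) t := by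
    simpa using (hasDerivAt_id t).const_sub 1
  have d2 : HasDerivAt (fun u : ℝ => β / (1 - u)) (β * (-((1 - t) ^ 2)⁻¹ * -1)) t := by
    simpa [div_eq_mul_inv] using (((hasDerivAt_inv h2.ne').comp t i2).const_mul β)
  have i3 : HasDerivAt (fun u : ℝ => 1 + u) (1 : ℝ) t := by
    simpa using (hasDerivAt_id t).const_add 1
  have d3 : HasDerivAt (fun u : ℝ => γ / (1 + u)) (γ * (-((1 + t) ^ 2)⁻¹ * 1)) t := by
    simpa [div_eq_mul_inv] using (((hasDerivAt_inv h3.ne').comp t i3).const_mul γ)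
  have := (d1.sub d2).add d3
  refine this.congr_deriv ?_
  symm
  unfold Lfun'
  field_simp
  ring

lemma cfun_eq_Pfun {ε x : ℝ} (hx : x ∈ Ioo (0:ℝ) 1) :
    (ww ε x * pp ε x) ^ (-(1:ℝ)/4) = Pfun ((1:ℝ)/4) (ca ε) (cb ε) x := by
  have h1 : (0:ℝ) < x := hx.1
  have h2 : (0:ℝ) < 1 - x := by linarith [hx.2]
  have h3 : (0:ℝ) < 1 + x := by linarith
  have key : ww ε x * pp ε x =
      x ^ (-1:ℝ) * (1 - x) ^ ((1:ℝ)/ε + (1 + 1/ε)) * (1 + x) ^ (-(1:ℝ)/ε + (1 - 1/ε)) := by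
    rw [Real.rpow_add h2, Real.rpow_add h3, Real.rpow_neg_one]
    unfold ww pp; ring
  rw [key, Real.mul_rpow (by positivity) (by positivity),
    Real.mul_rpow (by positivity) (by positivity),
    ← Real.rpow_mul h1.le, ← Real.rpow_mul h2.le, ← Real.rpow_mul h3.le]
  rw [show (-1:ℝ) * (-(1:ℝ)/4) = (1:ℝ)/4 by norm_num,
    show ((1:ℝ)/ε + (1 + 1/ε)) * (-(1:ℝ)/4) = ca ε by unfold ca; ring,
    show (-(1:ℝ)/ε + (1 - 1/ε)) * (-(1:ℝ)/4) = cb ε by unfold cb; ring]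
  rfl

lemma q_eq_Pfun {ε x : ℝ} (hx : x ∈ Ioo (0:ℝ) 1) :
    pp ε x / mfun x = Pfun (-(1:ℝ)/2) ((1:ℝ)/2 + 1/ε) ((1:ℝ)/2 - 1/ε) x := by
  have h1 : (0:ℝ) < x := hx.1
  have h2 : (0:ℝ) < 1 - x := by linarith [hx.2]
  have h3 : (0:ℝ) < 1 + x := by linarith
  have e1 : (0:ℝ) < x ^ ((1:ℝ)/2) := Real.rpow_pos_of_pos h1 _
  have e2 : (0:ℝ) < (1-x) ^ ((1:ℝ)/2) := Real.rpow_pos_of_pos h2 _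
  have e3 : (0:ℝ) < (1+x) ^ ((1:ℝ)/2) := Real.rpow_pos_of_pos h3 _
  have key : pp ε x / mfun x =
      (x ^ ((1:ℝ)/2))⁻¹ * ((1-x) ^ ((1:ℝ) + 1/ε) / (1-x) ^ ((1:ℝ)/2))
        * ((1+x) ^ ((1:ℝ) - 1/ε) / (1+x) ^ ((1:ℝ)/2)) := by
    unfold pp mfun; field_simp
  rw [key, ← Real.rpow_sub h2, ← Real.rpow_sub h3, ← Real.rpow_neg_one (x ^ ((1:ℝ)/2)),
    ← Real.rpow_mul h1.le]
  rw [show ((1:ℝ)/2) * (-1:ℝ) = -(1:ℝ)/2 by norm_num,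
    show (1:ℝ) + 1/ε - (1:ℝ)/2 = (1:ℝ)/2 + 1/ε by ring,
    show (1:ℝ) - 1/ε - (1:ℝ)/2 = (1:ℝ)/2 - 1/ε by ring]
  rfl

lemma Pc_sq_mul_Pq {ε x : ℝ} (hx : x ∈ Ioo (0:ℝ) 1) :
    Pfun ((1:ℝ)/4) (ca ε) (cb ε) x ^ 2 * Pfun (-(1:ℝ)/2) ((1:ℝ)/2 + 1/ε) ((1:ℝ)/2 - 1/ε) x = 1 := by
  have h1 : (0:ℝ) < x := hx.1
  have h2 : (0:ℝ) < 1 - x := by linarith [hx.2]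
  have h3 : (0:ℝ) < 1 + x := by linarith
  rw [sq, Pfun_mul hx, Pfun_mul hx]
  unfold ca cb
  rw [show (1:ℝ)/4 + 1/4 + -1/2 = 0 by ring,
    show -(1 + 2/ε)/4 + -(1 + 2/ε)/4 + ((1:ℝ)/2 + 1/ε) = 0 by ring,
    show -(1 - 2/ε)/4 + -(1 - 2/ε)/4 + ((1:ℝ)/2 - 1/ε) = 0 by ring]
  unfold Pfun
  simp

lemma mfun_sq {t : ℝ} (ht : t ∈ Ioo (0:ℝ) 1) : mfun t ^ 2 = t * (1 - t) * (1 + t) := by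
  have h1 : (0:ℝ) < t := ht.1
  have h2 : (0:ℝ) < 1 - t := by linarith [ht.2]
  have h3 : (0:ℝ) < 1 + t := by linarith
  rw [sq, mfun_eq_Pfun, Pfun_mul ht, show (1:ℝ)/2 + 1/2 = 1 by norm_num]
  unfold Pfun
  rw [Real.rpow_one, Real.rpow_one, Real.rpow_one]

lemma Lq_eq {ε t : ℝ} :
    Lfun (-(1:ℝ)/2) ((1:ℝ)/2 + 1/ε) ((1:ℝ)/2 - 1/ε) t = -2 * Lfun ((1:ℝ)/4) (ca ε) (cb ε) t := by
  unfold Lfun ca cb; ring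

noncomputable def Ffun (ε t : ℝ) : ℝ :=
  (t * (1 - t) * (1 + t)) *
    ((Lfun ((1:ℝ)/4) (ca ε) (cb ε) t)^2 - Lfun' ((1:ℝ)/4) (ca ε) (cb ε) t
      - Lfun ((1:ℝ)/4) (ca ε) (cb ε) t * Lfun ((1:ℝ)/2) ((1:ℝ)/2) ((1:ℝ)/2) t)

noncomputable def D1fun (ε t : ℝ) : ℝ :=
  Pfun ((1:ℝ)/4) (ca ε) (cb ε) t * Lfun ((1:ℝ)/4) (ca ε) (cb ε) t * mfun t

lemma hasDerivAt_mfun {t : ℝ} (ht : t ∈ Ioo (0:ℝ) 1) :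
    HasDerivAt mfun (mfun t * Lfun ((1:ℝ)/2) ((1:ℝ)/2) ((1:ℝ)/2) t) t := by
  rw [mfun_eq_Pfun]
  exact hasDerivAt_Pfun ht _ _ _

lemma hasDerivAt_D1 {ε : ℝ} {t : ℝ} (ht : t ∈ Ioo (0:ℝ) 1) :
    HasDerivAt (D1fun ε)
      ((Pfun ((1:ℝ)/4) (ca ε) (cb ε) t * Lfun ((1:ℝ)/4) (ca ε) (cb ε) t
          * Lfun ((1:ℝ)/4) (ca ε) (cb ε) t
        + Pfun ((1:ℝ)/4) (ca ε) (cb ε) t * Lfun' ((1:ℝ)/4) (ca ε) (cb ε) t) * mfun t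
        + Pfun ((1:ℝ)/4) (ca ε) (cb ε) t * Lfun ((1:ℝ)/4) (ca ε) (cb ε) t
          * (mfun t * Lfun ((1:ℝ)/2) ((1:ℝ)/2) ((1:ℝ)/2) t)) t := by
  exact ((hasDerivAt_Pfun ht _ _ _).mul (hasDerivAt_Lfun ht _ _ _)).mul (hasDerivAt_mfun ht)

section VpotEq
variable {φ : ℝ → ℝ}
  (hmaps : MapsTo φ (Icc 0 (psi 1)) (Icc (0:ℝ) 1))
  (hleft : ∀ t ∈ Icc (0:ℝ) 1, φ (psi t) = t)
  (hright : ∀ s ∈ Icc 0 (psi 1), psi (φ s) = s)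
include hmaps hleft hright
set_option linter.unusedSectionVars false

lemma cfun_hasDerivAt {ε : ℝ} {u : ℝ} (hu : u ∈ Ioo 0 (psi 1)) :
    HasDerivAt (cfun ε φ)
      (Pfun ((1:ℝ)/4) (ca ε) (cb ε) (φ u) * Lfun ((1:ℝ)/4) (ca ε) (cb ε) (φ u) * mfun (φ u)) u := by
  have hx := phi_mem hmaps hleft hright hu
  have hφ := phi_hasDerivAt hmaps hleft hright hu
  have hP := (hasDerivAt_Pfun hx ((1:ℝ)/4) (ca ε) (cb ε)).comp u hφ
  apply HasDerivAt.congr_of_eventuallyEq hP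
  filter_upwards [isOpen_Ioo.mem_nhds hu] with y hy
  exact cfun_eq_Pfun (phi_mem hmaps hleft hright hy)

lemma Vpot_eq {ε : ℝ} {s : ℝ} (hs : s ∈ Ioo 0 (psi 1)) :
    Vpot ε φ s = Ffun ε (φ s) := by
  set x := φ s with hxdef
  have hx : x ∈ Ioo (0:ℝ) 1 := phi_mem hmaps hleft hright hs
  have hφ := phi_hasDerivAt hmaps hleft hright hs
  have e1 : cfun ε φ s = Pfun ((1:ℝ)/4) (ca ε) (cb ε) x := cfun_eq_Pfun hx
  have e2 : deriv (cfun ε φ) s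
      = Pfun ((1:ℝ)/4) (ca ε) (cb ε) x * Lfun ((1:ℝ)/4) (ca ε) (cb ε) x * mfun x :=
    (cfun_hasDerivAt hmaps hleft hright hs).deriv
  have e4 : deriv φ s = mfun x := hφ.deriv
  have hEv : deriv (cfun ε φ) =ᶠ[nhds s] fun u => D1fun ε (φ u) := by
    filter_upwards [isOpen_Ioo.mem_nhds hs] with y hy
    exact (cfun_hasDerivAt hmaps hleft hright hy).deriv
  have e3 : deriv (deriv (cfun ε φ)) s
      = ((Pfun ((1:ℝ)/4) (ca ε) (cb ε) x * Lfun ((1:ℝ)/4) (ca ε) (cb ε) x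
            * Lfun ((1:ℝ)/4) (ca ε) (cb ε) x
          + Pfun ((1:ℝ)/4) (ca ε) (cb ε) x * Lfun' ((1:ℝ)/4) (ca ε) (cb ε) x) * mfun x
          + Pfun ((1:ℝ)/4) (ca ε) (cb ε) x * Lfun ((1:ℝ)/4) (ca ε) (cb ε) x
            * (mfun x * Lfun ((1:ℝ)/2) ((1:ℝ)/2) ((1:ℝ)/2) x)) * mfun x := by
    rw [hEv.deriv_eq]
    exact ((hasDerivAt_D1 hx).comp s hφ).deriv
  have hEv2 : (fun u => pp ε (φ u) / deriv φ u) =ᶠ[nhds s]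
      fun u => Pfun (-(1:ℝ)/2) ((1:ℝ)/2 + 1/ε) ((1:ℝ)/2 - 1/ε) (φ u) := by
    filter_upwards [isOpen_Ioo.mem_nhds hs] with y hy
    rw [(phi_hasDerivAt hmaps hleft hright hy).deriv]
    exact q_eq_Pfun (phi_mem hmaps hleft hright hy)
  have e5 : deriv (fun u => pp ε (φ u) / deriv φ u) s
      = Pfun (-(1:ℝ)/2) ((1:ℝ)/2 + 1/ε) ((1:ℝ)/2 - 1/ε) x
        * Lfun (-(1:ℝ)/2) ((1:ℝ)/2 + 1/ε) ((1:ℝ)/2 - 1/ε) x * mfun x := by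
    rw [hEv2.deriv_eq]
    exact ((hasDerivAt_Pfun hx _ _ _).comp s hφ).deriv
  have e6 : pp ε x / deriv φ s = Pfun (-(1:ℝ)/2) ((1:ℝ)/2 + 1/ε) ((1:ℝ)/2 - 1/ε) x := by
    rw [e4]; exact q_eq_Pfun hx
  have hK := Pc_sq_mul_Pq (ε := ε) hx
  have hm2 := mfun_sq hx
  unfold Vpot
  rw [e1, e2, e3, e5, e6, Lq_eq]
  unfold Ffun
  linear_combination
    (((Lfun ((1:ℝ)/4) (ca ε) (cb ε) x)^2 - Lfun' ((1:ℝ)/4) (ca ε) (cb ε) x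
        - Lfun ((1:ℝ)/4) (ca ε) (cb ε) x * Lfun ((1:ℝ)/2) ((1:ℝ)/2) ((1:ℝ)/2) x)
      * mfun x ^ 2) * hK
    + ((Lfun ((1:ℝ)/4) (ca ε) (cb ε) x)^2 - Lfun' ((1:ℝ)/4) (ca ε) (cb ε) x
        - Lfun ((1:ℝ)/4) (ca ε) (cb ε) x * Lfun ((1:ℝ)/2) ((1:ℝ)/2) ((1:ℝ)/2) x) * hm2

end VpotEq

lemma integral_rpow_half {c : ℝ} (hc : 0 ≤ c) :
    ∫ y in (0:ℝ)..c, y ^ (-(1:ℝ)/2) = 2 * c ^ ((1:ℝ)/2) := by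
  rw [integral_rpow (Or.inl (by norm_num))]
  rw [show (-(1:ℝ)/2 + 1) = (1:ℝ)/2 by norm_num, Real.zero_rpow (by norm_num : (1:ℝ)/2 ≠ 0)]
  ring

lemma psi_le {t : ℝ} (ht : t ∈ Ioo (0:ℝ) 1) :
    psi t ≤ 2 * t ^ ((1:ℝ)/2) * (1-t) ^ (-(1:ℝ)/2) := by
  have h1 : (0:ℝ) < t := ht.1
  have h2 : (0:ℝ) < 1 - t := by linarith [ht.2]
  rw [psi_eq_intervalIntegral h1.le]
  have hg : IntervalIntegrable (fun y : ℝ => (1-t) ^ (-(1:ℝ)/2) * y ^ (-(1:ℝ)/2)) volume 0 t :=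
    (intervalIntegral.intervalIntegrable_rpow' (by norm_num)).const_mul _
  have hmono := intervalIntegral.integral_mono_on h1.le
    (beta_intable (left_mem_Icc.2 zero_le_one) ⟨h1.le, ht.2.le⟩) hg ?_
  · calc (∫ y in (0:ℝ)..t, betaIntegrand y)
        ≤ ∫ y in (0:ℝ)..t, (1-t) ^ (-(1:ℝ)/2) * y ^ (-(1:ℝ)/2) := hmono
      _ = (1-t) ^ (-(1:ℝ)/2) * ∫ y in (0:ℝ)..t, y ^ (-(1:ℝ)/2) := by
          rw [intervalIntegral.integral_const_mul]
      _ = 2 * t ^ ((1:ℝ)/2) * (1-t) ^ (-(1:ℝ)/2) := by rw [integral_rpow_half h1.le]; ring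
  · intro y hy
    rcases eq_or_lt_of_le hy.1 with h | h
    · simp [betaIntegrand, ← h, Real.zero_rpow (show -(1:ℝ)/2 ≠ 0 by norm_num)]
    · have hy2 : (0:ℝ) < 1 - y := by linarith [hy.2]
      have hy3 : (0:ℝ) < 1 + y := by linarith
      unfold betaIntegrand
      have b1 : (1-y) ^ (-(1:ℝ)/2) ≤ (1-t) ^ (-(1:ℝ)/2) :=
        Real.rpow_le_rpow_of_nonpos h2 (by linarith [hy.2]) (by norm_num)
      have b2 : (1+y) ^ (-(1:ℝ)/2) ≤ 1 :=
        Real.rpow_le_one_of_one_le_of_nonpos (by linarith) (by norm_num)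
      calc y ^ (-(1:ℝ)/2) * (1-y) ^ (-(1:ℝ)/2) * (1+y) ^ (-(1:ℝ)/2)
          ≤ y ^ (-(1:ℝ)/2) * (1-t) ^ (-(1:ℝ)/2) * 1 :=
            mul_le_mul (mul_le_mul le_rfl b1 (by positivity) (by positivity)) b2
              (by positivity) (by positivity)
        _ = (1-t) ^ (-(1:ℝ)/2) * y ^ (-(1:ℝ)/2) := by ring

lemma le_psi {t : ℝ} (ht : t ∈ Ioo (0:ℝ) 1) :
    2 * t ^ ((1:ℝ)/2) * (1+t) ^ (-(1:ℝ)/2) ≤ psi t := by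
  have h1 : (0:ℝ) < t := ht.1
  have h3 : (0:ℝ) < 1 + t := by linarith
  rw [psi_eq_intervalIntegral h1.le]
  have hg : IntervalIntegrable (fun y : ℝ => (1+t) ^ (-(1:ℝ)/2) * y ^ (-(1:ℝ)/2)) volume 0 t :=
    (intervalIntegral.intervalIntegrable_rpow' (by norm_num)).const_mul _
  have hmono := intervalIntegral.integral_mono_on h1.le hg
    (beta_intable (left_mem_Icc.2 zero_le_one) ⟨h1.le, ht.2.le⟩) ?_
  · calc 2 * t ^ ((1:ℝ)/2) * (1+t) ^ (-(1:ℝ)/2)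
        = (1+t) ^ (-(1:ℝ)/2) * ∫ y in (0:ℝ)..t, y ^ (-(1:ℝ)/2) := by
          rw [integral_rpow_half h1.le]; ring
      _ = ∫ y in (0:ℝ)..t, (1+t) ^ (-(1:ℝ)/2) * y ^ (-(1:ℝ)/2) := by
          rw [intervalIntegral.integral_const_mul]
      _ ≤ ∫ y in (0:ℝ)..t, betaIntegrand y := hmono
  · intro y hy
    rcases eq_or_lt_of_le hy.1 with h | h
    · simp [betaIntegrand, ← h, Real.zero_rpow (show -(1:ℝ)/2 ≠ 0 by norm_num)]
    · have hy2 : (0:ℝ) < 1 - y := by linarith [hy.2, ht.2]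
      have hy3 : (0:ℝ) < 1 + y := by linarith
      unfold betaIntegrand
      have b1 : (1:ℝ) ≤ (1-y) ^ (-(1:ℝ)/2) := by
        nth_rewrite 1 [show (1:ℝ) = (1:ℝ) ^ (-(1:ℝ)/2) by simp]
        exact Real.rpow_le_rpow_of_nonpos hy2 (by linarith) (by norm_num)
      have b2 : (1+t) ^ (-(1:ℝ)/2) ≤ (1+y) ^ (-(1:ℝ)/2) :=
        Real.rpow_le_rpow_of_nonpos hy3 (by linarith [hy.2]) (by norm_num)
      calc (1+t) ^ (-(1:ℝ)/2) * y ^ (-(1:ℝ)/2)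
          = y ^ (-(1:ℝ)/2) * 1 * (1+t) ^ (-(1:ℝ)/2) := by ring
        _ ≤ y ^ (-(1:ℝ)/2) * (1-y) ^ (-(1:ℝ)/2) * (1+y) ^ (-(1:ℝ)/2) :=
            mul_le_mul (mul_le_mul le_rfl b1 (by norm_num) (by positivity)) b2
              (by positivity) (by positivity)

lemma psi_tail_eq {t : ℝ} (ht : t ∈ Icc (0:ℝ) 1) :
    psi 1 - psi t = ∫ y in t..1, betaIntegrand y := by
  rw [psi_eq_intervalIntegral ht.1, psi_eq_intervalIntegral zero_le_one,
    ← intervalIntegral.integral_add_adjacent_intervals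
      (beta_intable (left_mem_Icc.2 zero_le_one) ht) (beta_intable ht (right_mem_Icc.2 zero_le_one))]
  ring

lemma integral_one_sub_rpow {t : ℝ} (ht : t ∈ Icc (0:ℝ) 1) :
    ∫ y in t..1, (1-y) ^ (-(1:ℝ)/2) = 2 * (1-t) ^ ((1:ℝ)/2) := by
  have := intervalIntegral.integral_comp_sub_left (a := t) (b := 1)
    (fun y : ℝ => y ^ (-(1:ℝ)/2)) 1
  rw [this, show (1:ℝ) - 1 = 0 by ring]
  exact integral_rpow_half (by linarith [ht.2])

lemma tail_intable {t : ℝ} (ht : t ∈ Icc (0:ℝ) 1) (c : ℝ) :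
    IntervalIntegrable (fun y : ℝ => c * (1-y) ^ (-(1:ℝ)/2)) volume t 1 := by
  have h0 : IntervalIntegrable (fun y : ℝ => y ^ (-(1:ℝ)/2)) volume 0 (1 - t) :=
    intervalIntegral.intervalIntegrable_rpow' (by norm_num)
  have h2 : IntervalIntegrable (fun y : ℝ => (1-y) ^ (-(1:ℝ)/2)) volume t 1 := by
    have h3 := h0.comp_sub_left 1
    rw [show (1:ℝ) - (1 - t) = t by ring, show (1:ℝ) - 0 = 1 by ring] at h3
    exact h3.symm
  exact h2.const_mul c

lemma tail_le {t : ℝ} (ht : t ∈ Ioo (0:ℝ) 1) :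
    psi 1 - psi t ≤ t ^ (-(1:ℝ)/2) * (1+t) ^ (-(1:ℝ)/2) * (2 * (1-t) ^ ((1:ℝ)/2)) := by
  have h1 : (0:ℝ) < t := ht.1
  have h3 : (0:ℝ) < 1 + t := by linarith
  rw [psi_tail_eq ⟨h1.le, ht.2.le⟩]
  have hmono := intervalIntegral.integral_mono_on ht.2.le
    (beta_intable ⟨h1.le, ht.2.le⟩ (right_mem_Icc.2 zero_le_one))
    (tail_intable ⟨h1.le, ht.2.le⟩ (t ^ (-(1:ℝ)/2) * (1+t) ^ (-(1:ℝ)/2))) ?_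
  · calc (∫ y in t..1, betaIntegrand y)
        ≤ ∫ y in t..1, t ^ (-(1:ℝ)/2) * (1+t) ^ (-(1:ℝ)/2) * (1-y) ^ (-(1:ℝ)/2) := hmono
      _ = t ^ (-(1:ℝ)/2) * (1+t) ^ (-(1:ℝ)/2) * ∫ y in t..1, (1-y) ^ (-(1:ℝ)/2) := by
          rw [intervalIntegral.integral_const_mul]
      _ = t ^ (-(1:ℝ)/2) * (1+t) ^ (-(1:ℝ)/2) * (2 * (1-t) ^ ((1:ℝ)/2)) := by
          rw [integral_one_sub_rpow ⟨h1.le, ht.2.le⟩]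
  · intro y hy
    have hy1 : (0:ℝ) < y := lt_of_lt_of_le h1 hy.1
    have hy2 : (0:ℝ) ≤ 1 - y := by linarith [hy.2]
    have hy3 : (0:ℝ) < 1 + y := by linarith
    unfold betaIntegrand
    have b1 : y ^ (-(1:ℝ)/2) ≤ t ^ (-(1:ℝ)/2) :=
      Real.rpow_le_rpow_of_nonpos h1 hy.1 (by norm_num)
    have b2 : (1+y) ^ (-(1:ℝ)/2) ≤ (1+t) ^ (-(1:ℝ)/2) :=
      Real.rpow_le_rpow_of_nonpos h3 (by linarith [hy.1]) (by norm_num)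
    calc y ^ (-(1:ℝ)/2) * (1-y) ^ (-(1:ℝ)/2) * (1+y) ^ (-(1:ℝ)/2)
        = y ^ (-(1:ℝ)/2) * (1+y) ^ (-(1:ℝ)/2) * (1-y) ^ (-(1:ℝ)/2) := by ring
      _ ≤ t ^ (-(1:ℝ)/2) * (1+t) ^ (-(1:ℝ)/2) * (1-y) ^ (-(1:ℝ)/2) :=
          mul_le_mul (mul_le_mul b1 b2 (by positivity) (by positivity)) le_rfl
            (by positivity) (by positivity)

lemma le_tail {t : ℝ} (ht : t ∈ Ioo (0:ℝ) 1) :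
    (2:ℝ) ^ (-(1:ℝ)/2) * (2 * (1-t) ^ ((1:ℝ)/2)) ≤ psi 1 - psi t := by
  have h1 : (0:ℝ) < t := ht.1
  rw [psi_tail_eq ⟨h1.le, ht.2.le⟩]
  have hmono := intervalIntegral.integral_mono_on ht.2.le
    (tail_intable ⟨h1.le, ht.2.le⟩ ((2:ℝ) ^ (-(1:ℝ)/2)))
    (beta_intable ⟨h1.le, ht.2.le⟩ (right_mem_Icc.2 zero_le_one)) ?_
  · calc (2:ℝ) ^ (-(1:ℝ)/2) * (2 * (1-t) ^ ((1:ℝ)/2))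
        = (2:ℝ) ^ (-(1:ℝ)/2) * ∫ y in t..1, (1-y) ^ (-(1:ℝ)/2) := by
          rw [integral_one_sub_rpow ⟨h1.le, ht.2.le⟩]
      _ = ∫ y in t..1, (2:ℝ) ^ (-(1:ℝ)/2) * (1-y) ^ (-(1:ℝ)/2) := by
          rw [intervalIntegral.integral_const_mul]
      _ ≤ ∫ y in t..1, betaIntegrand y := hmono
  · intro y hy
    have hy1 : (0:ℝ) < y := lt_of_lt_of_le h1 hy.1
    have hy2 : (0:ℝ) ≤ 1 - y := by linarith [hy.2]
    have hy3 : (0:ℝ) < 1 + y := by linarith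
    unfold betaIntegrand
    have b1 : (1:ℝ) ≤ y ^ (-(1:ℝ)/2) := by
      nth_rewrite 1 [show (1:ℝ) = (1:ℝ) ^ (-(1:ℝ)/2) by simp]
      exact Real.rpow_le_rpow_of_nonpos hy1 hy.2 (by norm_num)
    have b2 : (2:ℝ) ^ (-(1:ℝ)/2) ≤ (1+y) ^ (-(1:ℝ)/2) :=
      Real.rpow_le_rpow_of_nonpos hy3 (by linarith [hy.2]) (by norm_num)
    calc (2:ℝ) ^ (-(1:ℝ)/2) * (1-y) ^ (-(1:ℝ)/2)
        = 1 * (2:ℝ) ^ (-(1:ℝ)/2) * (1-y) ^ (-(1:ℝ)/2) := by ring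
      _ ≤ y ^ (-(1:ℝ)/2) * (1+y) ^ (-(1:ℝ)/2) * (1-y) ^ (-(1:ℝ)/2) :=
          mul_le_mul (mul_le_mul b1 b2 (by positivity) (by positivity)) le_rfl
            (by positivity) (by positivity)
      _ = y ^ (-(1:ℝ)/2) * (1-y) ^ (-(1:ℝ)/2) * (1+y) ^ (-(1:ℝ)/2) := by ring

lemma rpow_half_sq {x : ℝ} (hx : 0 ≤ x) : (x ^ ((1:ℝ)/2))^2 = x := by
  rw [← Real.rpow_natCast (x ^ ((1:ℝ)/2)) 2, ← Real.rpow_mul hx]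
  norm_num

lemma rpow_neg_half_sq {x : ℝ} (hx : 0 ≤ x) : (x ^ (-(1:ℝ)/2))^2 = x⁻¹ := by
  rw [← Real.rpow_natCast (x ^ (-(1:ℝ)/2)) 2, ← Real.rpow_mul hx]
  norm_num [Real.rpow_neg_one]

lemma psi_pos_of_mem {t : ℝ} (ht : t ∈ Ioo (0:ℝ) 1) : 0 < psi t := by
  have := psi_strictMonoOn (left_mem_Icc.2 zero_le_one) ⟨ht.1.le, ht.2.le⟩ ht.1
  rwa [psi_zero] at this

lemma tendsto_psi_sq_ratio :
    Tendsto (fun t => psi t ^ 2 / (4 * t)) (nhdsWithin 0 (Ioo (0:ℝ) 1)) (nhds 1) := by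
  have hlow : Tendsto (fun t : ℝ => (1+t)⁻¹) (nhdsWithin 0 (Ioo (0:ℝ) 1)) (nhds 1) := by
    have hc : ContinuousAt (fun t : ℝ => (1+t)⁻¹) 0 :=
      ContinuousAt.inv₀ (by fun_prop) (by norm_num)
    refine Tendsto.mono_left ?_ nhdsWithin_le_nhds
    have := hc.tendsto; norm_num at this; exact this
  have hupp : Tendsto (fun t : ℝ => (1-t)⁻¹) (nhdsWithin 0 (Ioo (0:ℝ) 1)) (nhds 1) := by
    have hc : ContinuousAt (fun t : ℝ => (1-t)⁻¹) 0 :=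
      ContinuousAt.inv₀ (by fun_prop) (by norm_num)
    refine Tendsto.mono_left ?_ nhdsWithin_le_nhds
    have := hc.tendsto; norm_num at this; exact this
  apply tendsto_of_tendsto_of_tendsto_of_le_of_le' hlow hupp
  · filter_upwards [self_mem_nhdsWithin] with t ht
    have h1 : (0:ℝ) < t := ht.1
    have h3 : (0:ℝ) < 1 + t := by linarith
    have hb := le_psi ht
    have h0 : (0:ℝ) ≤ 2 * t ^ ((1:ℝ)/2) * (1+t) ^ (-(1:ℝ)/2) := by positivity
    have hsq : (2 * t ^ ((1:ℝ)/2) * (1+t) ^ (-(1:ℝ)/2))^2 ≤ psi t ^ 2 :=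
      pow_le_pow_left₀ h0 hb 2
    have hcomp : (2 * t ^ ((1:ℝ)/2) * (1+t) ^ (-(1:ℝ)/2))^2 = 4 * t * (1+t)⁻¹ := by
      rw [mul_pow, mul_pow, rpow_half_sq h1.le, rpow_neg_half_sq h3.le]; norm_num
    rw [le_div_iff₀ (by positivity : (0:ℝ) < 4 * t)]
    calc (1+t)⁻¹ * (4 * t) = 4 * t * (1+t)⁻¹ := by ring
      _ ≤ psi t ^ 2 := by rw [← hcomp]; exact hsq
  · filter_upwards [self_mem_nhdsWithin] with t ht
    have h1 : (0:ℝ) < t := ht.1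
    have h2 : (0:ℝ) < 1 - t := by linarith [ht.2]
    have hb := psi_le ht
    have h0 : (0:ℝ) ≤ psi t := (psi_pos_of_mem ht).le
    have hsq : psi t ^ 2 ≤ (2 * t ^ ((1:ℝ)/2) * (1-t) ^ (-(1:ℝ)/2))^2 :=
      pow_le_pow_left₀ h0 hb 2
    have hcomp : (2 * t ^ ((1:ℝ)/2) * (1-t) ^ (-(1:ℝ)/2))^2 = 4 * t * (1-t)⁻¹ := by
      rw [mul_pow, mul_pow, rpow_half_sq h1.le, rpow_neg_half_sq h2.le]; norm_num
    rw [div_le_iff₀ (by positivity : (0:ℝ) < 4 * t)]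
    calc psi t ^ 2 ≤ 4 * t * (1-t)⁻¹ := by rw [← hcomp]; exact hsq
      _ = (1-t)⁻¹ * (4 * t) := by ring

lemma tendsto_tail_sq_ratio :
    Tendsto (fun t => (psi 1 - psi t) ^ 2 / (2 * (1-t))) (nhdsWithin 1 (Ioo (0:ℝ) 1)) (nhds 1) := by
  have hupp : Tendsto (fun t : ℝ => 2 * t⁻¹ * (1+t)⁻¹) (nhdsWithin 1 (Ioo (0:ℝ) 1)) (nhds 1) := by
    have hc : ContinuousAt (fun t : ℝ => 2 * t⁻¹ * (1+t)⁻¹) 1 :=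
      (ContinuousAt.mul continuousAt_const (ContinuousAt.inv₀ (by fun_prop) (by norm_num))).mul
        (ContinuousAt.inv₀ (by fun_prop) (by norm_num))
    refine Tendsto.mono_left ?_ nhdsWithin_le_nhds
    have := hc.tendsto; norm_num at this; exact this
  apply tendsto_of_tendsto_of_tendsto_of_le_of_le' tendsto_const_nhds hupp
  · filter_upwards [self_mem_nhdsWithin] with t ht
    have h2 : (0:ℝ) < 1 - t := by linarith [ht.2]
    have hb := le_tail ht
    have h0 : (0:ℝ) ≤ (2:ℝ) ^ (-(1:ℝ)/2) * (2 * (1-t) ^ ((1:ℝ)/2)) := by positivity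
    have hsq : ((2:ℝ) ^ (-(1:ℝ)/2) * (2 * (1-t) ^ ((1:ℝ)/2)))^2 ≤ (psi 1 - psi t) ^ 2 :=
      pow_le_pow_left₀ h0 hb 2
    have hcomp : ((2:ℝ) ^ (-(1:ℝ)/2) * (2 * (1-t) ^ ((1:ℝ)/2)))^2 = 2 * (1-t) := by
      rw [mul_pow, mul_pow, rpow_half_sq h2.le, rpow_neg_half_sq (by norm_num : (0:ℝ) ≤ 2)]
      ring
    rw [le_div_iff₀ (by positivity : (0:ℝ) < 2 * (1-t))]
    calc (1:ℝ) * (2 * (1-t)) = 2 * (1-t) := by ring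
      _ ≤ (psi 1 - psi t)^2 := by rw [← hcomp]; exact hsq
  · filter_upwards [self_mem_nhdsWithin] with t ht
    have h1 : (0:ℝ) < t := ht.1
    have h2 : (0:ℝ) < 1 - t := by linarith [ht.2]
    have h3 : (0:ℝ) < 1 + t := by linarith
    have hb := tail_le ht
    have h0 : (0:ℝ) ≤ psi 1 - psi t := by
      have := le_tail ht
      have hp : (0:ℝ) ≤ (2:ℝ) ^ (-(1:ℝ)/2) * (2 * (1-t) ^ ((1:ℝ)/2)) := by positivity
      linarith
    have hsq : (psi 1 - psi t)^2 ≤ (t ^ (-(1:ℝ)/2) * (1+t) ^ (-(1:ℝ)/2) * (2 * (1-t) ^ ((1:ℝ)/2)))^2 :=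
      pow_le_pow_left₀ h0 hb 2
    have hcomp : (t ^ (-(1:ℝ)/2) * (1+t) ^ (-(1:ℝ)/2) * (2 * (1-t) ^ ((1:ℝ)/2)))^2
        = 2 * t⁻¹ * (1+t)⁻¹ * (2 * (1-t)) := by
      rw [mul_pow, mul_pow, mul_pow, rpow_half_sq h2.le, rpow_neg_half_sq h1.le,
        rpow_neg_half_sq h3.le]
      ring
    rw [div_le_iff₀ (by positivity : (0:ℝ) < 2 * (1-t))]
    calc (psi 1 - psi t)^2 ≤ 2 * t⁻¹ * (1+t)⁻¹ * (2 * (1-t)) := by rw [← hcomp]; exact hsq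

lemma tendsto_Ffun_zero (ε : ℝ) :
    Tendsto (fun t => Ffun ε t * t) (nhdsWithin 0 (Ioo (0:ℝ) 1)) (nhds (3/16)) := by
  have l1 : Tendsto (fun t : ℝ => t/(1-t)) (nhds 0) (nhds 0) := by
    have hc : ContinuousAt (fun t : ℝ => t/(1-t)) 0 :=
      ContinuousAt.div (by fun_prop) (by fun_prop) (by norm_num)
    have := hc.tendsto; norm_num at this; exact this
  have l2 : Tendsto (fun t : ℝ => t/(1+t)) (nhds 0) (nhds 0) := by
    have hc : ContinuousAt (fun t : ℝ => t/(1+t)) 0 :=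
      ContinuousAt.div (by fun_prop) (by fun_prop) (by norm_num)
    have := hc.tendsto; norm_num at this; exact this
  have hA : Tendsto (fun t : ℝ => 1/4 - ca ε * (t/(1-t)) + cb ε * (t/(1+t)))
      (nhds 0) (nhds (1/4)) := by
    have := (tendsto_const_nhds (x := (1:ℝ)/4) (f := nhds (0:ℝ))).sub
      (l1.const_mul (ca ε)) |>.add (l2.const_mul (cb ε))
    simpa using this
  have hB : Tendsto (fun t : ℝ => -(1/4) - ca ε * (t/(1-t))^2 - cb ε * (t/(1+t))^2)
      (nhds 0) (nhds (-(1/4))) := by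
    have := ((tendsto_const_nhds (x := -(1:ℝ)/4) (f := nhds (0:ℝ))).sub
      ((l1.pow 2).const_mul (ca ε))).sub ((l2.pow 2).const_mul (cb ε))
    norm_num at this ⊢
    convert this using 2 <;> norm_num
  have hC : Tendsto (fun t : ℝ => 1/2 - (1/2) * (t/(1-t)) + (1/2) * (t/(1+t)))
      (nhds 0) (nhds (1/2)) := by
    have := (tendsto_const_nhds (x := (1:ℝ)/2) (f := nhds (0:ℝ))).sub
      (l1.const_mul (1/2)) |>.add (l2.const_mul (1/2))
    simpa using this
  have hD : Tendsto (fun t : ℝ => (1-t)*(1+t)) (nhds (0:ℝ)) (nhds 1) := by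
    have hc : ContinuousAt (fun t : ℝ => (1-t)*(1+t)) 0 := by fun_prop
    have := hc.tendsto; norm_num at this; exact this
  have main := hD.mul (((hA.pow 2).sub hB).sub (hA.mul hC))
  have main' : Tendsto (fun t : ℝ => ((1-t)*(1+t)) *
      ((1/4 - ca ε * (t/(1-t)) + cb ε * (t/(1+t)))^2
        - (-(1/4) - ca ε * (t/(1-t))^2 - cb ε * (t/(1+t))^2)
        - (1/4 - ca ε * (t/(1-t)) + cb ε * (t/(1+t)))
          * (1/2 - (1/2) * (t/(1-t)) + (1/2) * (t/(1+t)))))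
      (nhds (0:ℝ)) (nhds (3/16)) := by
    convert main using 2
    norm_num
  apply Tendsto.congr' _ (main'.mono_left nhdsWithin_le_nhds)
  filter_upwards [self_mem_nhdsWithin] with t ht
  have h1 : t ≠ 0 := ne_of_gt ht.1
  have h2 : (1:ℝ) - t ≠ 0 := by have := ht.2; intro h; linarith [(by linarith : (0:ℝ) < 1 - t)]
  have h3 : (1:ℝ) + t ≠ 0 := by have := ht.1; intro h; linarith
  unfold Ffun Lfun Lfun'
  field_simp

lemma tendsto_Ffun_one (ε : ℝ) :
    Tendsto (fun t => Ffun ε t * (1-t)) (nhdsWithin 1 (Ioo (0:ℝ) 1))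
      (nhds (2 * (ca ε)^2 + ca ε)) := by
  have l1 : Tendsto (fun t : ℝ => (1-t)/t) (nhds 1) (nhds 0) := by
    have hc : ContinuousAt (fun t : ℝ => (1-t)/t) 1 :=
      ContinuousAt.div (by fun_prop) (by fun_prop) (by norm_num)
    have := hc.tendsto; norm_num at this; exact this
  have l2 : Tendsto (fun t : ℝ => (1-t)/(1+t)) (nhds 1) (nhds 0) := by
    have hc : ContinuousAt (fun t : ℝ => (1-t)/(1+t)) 1 :=
      ContinuousAt.div (by fun_prop) (by fun_prop) (by norm_num)
    have := hc.tendsto; norm_num at this; exact this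
  have hA : Tendsto (fun t : ℝ => (1/4) * ((1-t)/t) - ca ε + cb ε * ((1-t)/(1+t)))
      (nhds 1) (nhds (-(ca ε))) := by
    have := ((l1.const_mul (1/4)).sub
      (tendsto_const_nhds (x := ca ε) (f := nhds (1:ℝ)))).add (l2.const_mul (cb ε))
    simpa using this
  have hB : Tendsto (fun t : ℝ => -(1/4) * ((1-t)/t)^2 - ca ε - cb ε * ((1-t)/(1+t))^2)
      (nhds 1) (nhds (-(ca ε))) := by
    have := (((l1.pow 2).const_mul (-(1:ℝ)/4)).sub
      (tendsto_const_nhds (x := ca ε) (f := nhds (1:ℝ)))).sub ((l2.pow 2).const_mul (cb ε))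
    norm_num at this ⊢
    convert this using 2 <;> norm_num
  have hC : Tendsto (fun t : ℝ => (1/2) * ((1-t)/t) - 1/2 + (1/2) * ((1-t)/(1+t)))
      (nhds 1) (nhds (-(1/2))) := by
    have := ((l1.const_mul ((1:ℝ)/2)).sub
      (tendsto_const_nhds (x := (1:ℝ)/2) (f := nhds (1:ℝ)))).add (l2.const_mul (1/2))
    simpa using this
  have hD : Tendsto (fun t : ℝ => t*(1+t)) (nhds (1:ℝ)) (nhds 2) := by
    have hc : ContinuousAt (fun t : ℝ => t*(1+t)) 1 := by fun_prop
    have := hc.tendsto; norm_num at this; exact this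
  have main := hD.mul (((hA.pow 2).sub hB).sub (hA.mul hC))
  have main' : Tendsto (fun t : ℝ => (t*(1+t)) *
      (((1/4) * ((1-t)/t) - ca ε + cb ε * ((1-t)/(1+t)))^2
        - (-(1/4) * ((1-t)/t)^2 - ca ε - cb ε * ((1-t)/(1+t))^2)
        - ((1/4) * ((1-t)/t) - ca ε + cb ε * ((1-t)/(1+t)))
          * ((1/2) * ((1-t)/t) - 1/2 + (1/2) * ((1-t)/(1+t)))))
      (nhds (1:ℝ)) (nhds (2 * (ca ε)^2 + ca ε)) := by
    convert main using 2
    ring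
  apply Tendsto.congr' _ (main'.mono_left nhdsWithin_le_nhds)
  filter_upwards [self_mem_nhdsWithin] with t ht
  have h1 : t ≠ 0 := ne_of_gt ht.1
  have h2 : (1:ℝ) - t ≠ 0 := by have := ht.2; intro h; linarith [(by linarith : (0:ℝ) < 1 - t)]
  have h3 : (1:ℝ) + t ≠ 0 := by have := ht.1; intro h; linarith
  unfold Ffun Lfun Lfun'
  field_simp

lemma rpow_neg_two {x : ℝ} (hx : 0 < x) : x ^ (-(2:ℝ)) = (x^2)⁻¹ := by
  rw [show (-(2:ℝ)) = ((-2:ℤ):ℝ) by norm_num, Real.rpow_intCast, zpow_neg]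
  norm_num

section Endpoints
variable {φ : ℝ → ℝ}
  (hmaps : MapsTo φ (Icc 0 (psi 1)) (Icc (0:ℝ) 1))
  (hleft : ∀ t ∈ Icc (0:ℝ) 1, φ (psi t) = t)
  (hright : ∀ s ∈ Icc 0 (psi 1), psi (φ s) = s)
include hmaps hleft hright
set_option linter.unusedSectionVars false

lemma tendsto_phi_zero :
    Tendsto φ (nhdsWithin 0 (Ioo 0 (psi 1))) (nhdsWithin 0 (Ioo (0:ℝ) 1)) := by
  rw [tendsto_nhdsWithin_iff]
  constructor
  · rw [tendsto_order]
    constructor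
    · intro a ha
      filter_upwards [self_mem_nhdsWithin] with s hs
      exact lt_trans ha (phi_mem hmaps hleft hright hs).1
    · intro a ha
      by_cases h1 : 1 ≤ a
      · filter_upwards [self_mem_nhdsWithin] with s hs
        exact lt_of_lt_of_le (phi_mem hmaps hleft hright hs).2 h1
      · push_neg at h1
        have hpa : 0 < psi a := psi_pos_of_mem ⟨ha, h1⟩
        have hmem : Iio (psi a) ∈ nhdsWithin (0:ℝ) (Ioo 0 (psi 1)) :=
          mem_nhdsWithin_of_mem_nhds (Iio_mem_nhds hpa)
        filter_upwards [self_mem_nhdsWithin, hmem] with s hs hlt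
        by_contra hcon
        push_neg at hcon
        have hle : psi a ≤ psi (φ s) :=
          psi_strictMonoOn.monotoneOn ⟨ha.le, h1.le⟩ (hmaps ⟨hs.1.le, hs.2.le⟩) hcon
        rw [hright s ⟨hs.1.le, hs.2.le⟩] at hle
        exact absurd hlt (not_lt.2 hle)
  · filter_upwards [self_mem_nhdsWithin] with s hs
    exact phi_mem hmaps hleft hright hs

lemma tendsto_phi_one :
    Tendsto φ (nhdsWithin (psi 1) (Ioo 0 (psi 1))) (nhdsWithin 1 (Ioo (0:ℝ) 1)) := by
  rw [tendsto_nhdsWithin_iff]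
  constructor
  · rw [tendsto_order]
    constructor
    · intro a ha
      by_cases h0 : a < 0
      · filter_upwards [self_mem_nhdsWithin] with s hs
        exact lt_trans h0 (phi_mem hmaps hleft hright hs).1
      · push_neg at h0
        have hpa : psi a < psi 1 :=
          psi_strictMonoOn ⟨h0, ha.le⟩ (right_mem_Icc.2 zero_le_one) ha
        have hmem : Ioi (psi a) ∈ nhdsWithin (psi 1) (Ioo 0 (psi 1)) :=
          mem_nhdsWithin_of_mem_nhds (Ioi_mem_nhds hpa)
        filter_upwards [self_mem_nhdsWithin, hmem] with s hs hgt
        by_contra hcon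
        push_neg at hcon
        have hle : psi (φ s) ≤ psi a :=
          psi_strictMonoOn.monotoneOn (hmaps ⟨hs.1.le, hs.2.le⟩) ⟨h0, ha.le⟩ hcon
        rw [hright s ⟨hs.1.le, hs.2.le⟩] at hle
        exact absurd hgt (not_lt.2 hle)
    · intro a ha
      filter_upwards [self_mem_nhdsWithin] with s hs
      exact lt_trans (phi_mem hmaps hleft hright hs).2 ha
  · filter_upwards [self_mem_nhdsWithin] with s hs
    exact phi_mem hmaps hleft hright hs

end Endpoints

/-- V(s) ∼ (3/4)s^{-2} as s → 0+ and V(s) ∼ (1/ε² − 1/4)(β−s)^{-2} as s → β−. -/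
theorem Vpot_asymptotics (ε : ℝ) (hε : ε ∈ Ioo (0:ℝ) 2) (φ : ℝ → ℝ)
    (hmaps : MapsTo φ (Icc 0 (psi 1)) (Icc (0:ℝ) 1))
    (hleft : ∀ t ∈ Icc (0:ℝ) 1, φ (psi t) = t)
    (hright : ∀ s ∈ Icc 0 (psi 1), psi (φ s) = s) :
    Tendsto (fun s => Vpot ε φ s / ((3/4) * s ^ (-(2:ℝ))))
        (nhdsWithin 0 (Ioo 0 (psi 1))) (nhds 1) ∧
      Tendsto (fun s => Vpot ε φ s / ((1/ε^2 - 1/4) * (psi 1 - s) ^ (-(2:ℝ))))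
        (nhdsWithin (psi 1) (Ioo 0 (psi 1))) (nhds 1) := by
  have hε0 : ε ≠ 0 := ne_of_gt hε.1
  have hc0 : (0:ℝ) < 1/ε^2 - 1/4 := by
    have h2 : ε^2 < 4 := by nlinarith [hε.1, hε.2]
    have hε2 : (0:ℝ) < ε^2 := by positivity
    have : (1:ℝ)/4 < 1/ε^2 := by
      apply one_div_lt_one_div_of_lt hε2 h2
    linarith
  constructor
  · -- s → 0⁺
    have hG : Tendsto (fun t => Ffun ε t * t * (psi t ^ 2 / (4 * t)) * (16/3))
        (nhdsWithin 0 (Ioo (0:ℝ) 1)) (nhds 1) := by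
      have h := ((tendsto_Ffun_zero ε).mul tendsto_psi_sq_ratio).mul
        (tendsto_const_nhds (x := (16:ℝ)/3))
      convert h using 2
      norm_num
    have hcomp := hG.comp (tendsto_phi_zero hmaps hleft hright)
    apply Tendsto.congr' _ hcomp
    filter_upwards [self_mem_nhdsWithin] with s hs
    have hsc : s ∈ Icc 0 (psi 1) := ⟨hs.1.le, hs.2.le⟩
    have hx : φ s ∈ Ioo (0:ℝ) 1 := phi_mem hmaps hleft hright hs
    have hs0 : (0:ℝ) < s := hs.1
    simp only [Function.comp_apply]
    rw [hright s hsc, Vpot_eq hmaps hleft hright hs, rpow_neg_two hs0]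
    have hx0 : φ s ≠ 0 := ne_of_gt hx.1
    field_simp
    ring
  · -- s → β⁻
    have hval : (2 * (ca ε)^2 + ca ε) * 1 * (2/(1/ε^2 - 1/4)) = 1 := by
      have hcne : 1/ε^2 - 1/4 ≠ 0 := ne_of_gt hc0
      have hhalf : 2*(ca ε)^2 + ca ε = (1/ε^2 - 1/4)/2 := by
        unfold ca; field_simp; ring
      rw [hhalf, mul_one]
      have h4 : (4:ℝ) - ε^2 ≠ 0 := by nlinarith [hε.1, hε.2]
      field_simp
    have hG : Tendsto (fun t => Ffun ε t * (1-t) * ((psi 1 - psi t) ^ 2 / (2 * (1-t)))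
          * (2/(1/ε^2 - 1/4)))
        (nhdsWithin 1 (Ioo (0:ℝ) 1)) (nhds 1) := by
      have h := ((tendsto_Ffun_one ε).mul tendsto_tail_sq_ratio).mul
        (tendsto_const_nhds (x := 2/(1/ε^2 - 1/4)))
      rw [hval] at h
      exact h
    have hcomp := hG.comp (tendsto_phi_one hmaps hleft hright)
    apply Tendsto.congr' _ hcomp
    filter_upwards [self_mem_nhdsWithin] with s hs
    have hsc : s ∈ Icc 0 (psi 1) := ⟨hs.1.le, hs.2.le⟩
    have hx : φ s ∈ Ioo (0:ℝ) 1 := phi_mem hmaps hleft hright hs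
    have hβs : (0:ℝ) < psi 1 - s := by linarith [hs.2]
    simp only [Function.comp_apply]
    rw [hright s hsc, Vpot_eq hmaps hleft hright hs, rpow_neg_two hβs]
    have hx1 : (1:ℝ) - φ s ≠ 0 := by have := hx.2; intro h; linarith [(by linarith : (0:ℝ) < 1 - φ s)]
    have hβs' : psi 1 - s ≠ 0 := ne_of_gt hβs
    set C := 1/ε^2 - 1/4 with hCdef
    have hC : C ≠ 0 := ne_of_gt hc0
    field_simp
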